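/- Let E: y² = x³ + a₂x² + a₄x + a₆ over a field of characteristic ≠ 2, A a point of order 2, and P, P' points with 2P = 2P' = A and P ≠ ±P'. Then x_P + x_{P'} = 2·x_A. -/

import Mathlib

open WeierstrassCurve.Affine

open Classical in
/-- Let `E : y² = x³ + a₂x² + a₄x + a₆` over a field of characteristic `≠ 2`, `A` a point of
order 2, and `P, P'` points with `2P = 2P' = A` and `P ≠ ±P'`. Then `x_P + x_{P'} = 2x_A`. -/
theorem stmt_18 (K : Type*) [Field K] (h2 : (2 : K) ≠ 0) (a₂ a₄ a₆ : K)
    (W : WeierstrassCurve K)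
    (hW : W = { a₁ := 0, a₂ := a₂, a₃ := 0, a₄ := a₄, a₆ := a₆ })
    (hΔ : W.Δ ≠ 0)
    (xA yA xP yP xP' yP' : K)
    (hA : W.toAffine.Nonsingular xA yA) (hP : W.toAffine.Nonsingular xP yP)
    (hP' : W.toAffine.Nonsingular xP' yP')
    (hA2 : (2 : ℕ) • (Point.some _ _ hA) = 0) (hA0 : Point.some _ _ hA ≠ 0)
    (h2P : (2 : ℕ) • (Point.some _ _ hP) = Point.some _ _ hA)
    (h2P' : (2 : ℕ) • (Point.some _ _ hP') = Point.some _ _ hA)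
    (hne : Point.some _ _ hP ≠ Point.some _ _ hP')
    (hne' : Point.some _ _ hP ≠ -Point.some _ _ hP') :
    xP + xP' = 2 * xA := by
  subst hW
  have ha₁ : (({ a₁ := 0, a₂ := a₂, a₃ := 0, a₄ := a₄, a₆ := a₆ } : WeierstrassCurve K)).a₁ = 0 := rfl
  -- negY is just negation
  have hnegY : ∀ x y : K,
      (({ a₁ := 0, a₂ := a₂, a₃ := 0, a₄ := a₄, a₆ := a₆ } : WeierstrassCurve K)).toAffine.negY x y
        = -y := by
    intro x y; simp [WeierstrassCurve.Affine.negY]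
  let W' : WeierstrassCurve K := { a₁ := 0, a₂ := a₂, a₃ := 0, a₄ := a₄, a₆ := a₆ }
  have hW' : W' = { a₁ := 0, a₂ := a₂, a₃ := 0, a₄ := a₄, a₆ := a₆ } := rfl
  -- curve equations
  have eqA : yA ^ 2 = xA ^ 3 + a₂ * xA ^ 2 + a₄ * xA + a₆ := by
    have := (W'.toAffine.equation_iff xA yA).mp hA.1
    simpa [hW'] using this
  have eqP : yP ^ 2 = xP ^ 3 + a₂ * xP ^ 2 + a₄ * xP + a₆ := by
    have := (W'.toAffine.equation_iff xP yP).mp hP.1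
    simpa [hW'] using this
  have eqP' : yP' ^ 2 = xP' ^ 3 + a₂ * xP' ^ 2 + a₄ * xP' + a₆ := by
    have := (W'.toAffine.equation_iff xP' yP').mp hP'.1
    simpa [hW'] using this
  -- yA = 0
  have hyA : yA = 0 := by
    by_contra hy
    have hyne : yA ≠ W'.toAffine.negY xA yA := by
      rw [hnegY]
      intro h
      apply hy
      have h20 : 2 * yA = 0 := by linear_combination h
      rcases mul_eq_zero.mp h20 with h' | h'
      · exact absurd h' h2
      · exact h'
    rw [two_smul] at hA2
    rw [Point.add_self_of_Y_ne hyne] at hA2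
    exact Point.some_ne_zero _ hA2
  -- yP ≠ 0 and yP' ≠ 0
  have hyP : yP ≠ 0 := by
    intro hy
    have hyeq : yP = W'.toAffine.negY xP yP := by rw [hnegY, hy, neg_zero]
    rw [two_smul, Point.add_self_of_Y_eq hyeq] at h2P
    exact hA0 h2P.symm
  have hyP' : yP' ≠ 0 := by
    intro hy
    have hyeq : yP' = W'.toAffine.negY xP' yP' := by rw [hnegY, hy, neg_zero]
    rw [two_smul, Point.add_self_of_Y_eq hyeq] at h2P'
    exact hA0 h2P'.symm
  have hyPne : yP ≠ W'.toAffine.negY xP yP := by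
    rw [hnegY]; intro h
    exact hyP (by
      have h20 : 2 * yP = 0 := by linear_combination h
      rcases mul_eq_zero.mp h20 with h' | h'
      · exact absurd h' h2
      · exact h')
  have hyP'ne : yP' ≠ W'.toAffine.negY xP' yP' := by
    rw [hnegY]; intro h
    exact hyP' (by
      have h20 : 2 * yP' = 0 := by linear_combination h
      rcases mul_eq_zero.mp h20 with h' | h'
      · exact absurd h' h2
      · exact h')
  -- doubling relation for P
  have key : ∀ (x y : K), y ≠ 0 →
      y ^ 2 = x ^ 3 + a₂ * x ^ 2 + a₄ * x + a₆ →
      (hN : W'.toAffine.Nonsingular x y) →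
      (2 : ℕ) • (Point.some _ _ hN) = Point.some _ _ hA →
      (xA + a₂ + 2 * x) * (2 * y) ^ 2 = (3 * x ^ 2 + 2 * a₂ * x + a₄) ^ 2 := by
    intro x y hy0 heq hN hdbl
    have hyne : y ≠ W'.toAffine.negY x y := by
      rw [hnegY]; intro h
      exact hy0 (by
        have h20 : 2 * y = 0 := by linear_combination h
        rcases mul_eq_zero.mp h20 with h' | h'
        · exact absurd h' h2
        · exact h')
    rw [two_smul, Point.add_self_of_Y_ne hyne] at hdbl
    have hx := (Point.some.inj hdbl).1
    -- slope
    have hslope : W'.toAffine.slope x x y y = (3 * x ^ 2 + 2 * a₂ * x + a₄) / (2 * y) := by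
      rw [WeierstrassCurve.Affine.slope_of_Y_ne rfl hyne, hnegY]
      congr 1
      · simp [hW']
      · ring
    have h2y : (2 : K) * y ≠ 0 := mul_ne_zero h2 hy0
    have hxA : W'.toAffine.addX x x (W'.toAffine.slope x x y y) = xA := hx
    rw [WeierstrassCurve.Affine.addX, hslope] at hxA
    have : ((3 * x ^ 2 + 2 * a₂ * x + a₄) / (2 * y)) ^ 2 + W'.a₁ *
        ((3 * x ^ 2 + 2 * a₂ * x + a₄) / (2 * y)) - W'.a₂ - x - x = xA := hxA
    simp only [hW'] at this
    field_simp at this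
    linear_combination -this
  have E1 := key xP yP hyP eqP hP h2P
  have E2 := key xP' yP' hyP' eqP' hP' h2P'
  -- xP ≠ xP'
  have hxne : xP ≠ xP' := by
    intro hx
    have hysq : yP ^ 2 = yP' ^ 2 := by rw [eqP, eqP', hx]
    have : (yP - yP') * (yP + yP') = 0 := by linear_combination hysq
    rcases mul_eq_zero.mp this with h | h
    · have hy : yP = yP' := sub_eq_zero.mp h
      apply hne
      subst hx; subst hy; rfl
    · have hy : yP = -yP' := eq_neg_of_add_eq_zero_left h
      apply hne'
      rw [Point.neg_some]
      have hy' : yP = W'.toAffine.negY xP' yP' := by rw [hnegY]; exact hy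
      subst hx
      exact hy' ▸ rfl
  -- cubic relation for xA (since yA = 0)
  have cubA : xA ^ 3 + a₂ * xA ^ 2 + a₄ * xA + a₆ = 0 := by
    rw [← eqA, hyA]; ring
  -- the half-fiber quadratic
  have qP : (xP ^ 2 - 2 * xA * xP - 2 * xA ^ 2 - 2 * a₂ * xA - a₄) ^ 2 = 0 := by
    linear_combination -E1 + (4 * (xA + a₂ + 2 * xP)) * eqP + (4 * (xA + a₂ + 2 * xP)) * cubA
  have qP' : (xP' ^ 2 - 2 * xA * xP' - 2 * xA ^ 2 - 2 * a₂ * xA - a₄) ^ 2 = 0 := by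
    linear_combination -E2 + (4 * (xA + a₂ + 2 * xP')) * eqP' + (4 * (xA + a₂ + 2 * xP')) * cubA
  have qP0 : xP ^ 2 - 2 * xA * xP - 2 * xA ^ 2 - 2 * a₂ * xA - a₄ = 0 :=
    (pow_eq_zero_iff two_ne_zero).mp qP
  have qP'0 : xP' ^ 2 - 2 * xA * xP' - 2 * xA ^ 2 - 2 * a₂ * xA - a₄ = 0 :=
    (pow_eq_zero_iff two_ne_zero).mp qP'
  have hfac : (xP - xP') * (xP + xP' - 2 * xA) = 0 := by
    linear_combination qP0 - qP'0
  rcases mul_eq_zero.mp hfac with h | h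
  · exact absurd (sub_eq_zero.mp h) hxne
  · linear_combination h
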